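/- Let ρ ∈ M₂(ℂ) be a positive definite density matrix. Suppose β₁, β₂ > 0 are real numbers and H₁, H₂ ∈ M₂(ℂ) are Hermitian, positive semidefinite with det H₁ = det H₂ = 0, and ρ = exp(−β₁·H₁)/tr(exp(−β₁·H₁)) = exp(−β₂·H₂)/tr(exp(−β₂·H₂)). Then β₁·H₁ = β₂·H₂; in particular, H₂ = (β₁/β₂)·H₁, so the pair (β, H) in the Gibbs representation of ρ is unique up to the simultaneous scaling β ↦ λβ, H ↦ λ⁻¹H with λ > 0. -/

import Mathlib

open Matrix NormedSpace
open scoped ComplexOrder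

lemma sq_eq_trace_smul (M : Matrix (Fin 2) (Fin 2) ℂ) (h : M.det = 0) :
    M * M = M.trace • M := by
  rw [Matrix.det_fin_two] at h
  ext i j
  fin_cases i <;> fin_cases j <;>
    simp [Matrix.mul_apply, Matrix.trace_fin_two, Fin.sum_univ_two] <;>
    first | ring1 | linear_combination -h | linear_combination h

lemma exp_of_sq (B : Matrix (Fin 2) (Fin 2) ℂ) (h : B * B = B.trace • B) :
    ∃ s : ℂ, exp B = 1 + s • B ∧ B.trace * s + 1 = Complex.exp B.trace := by
  have hpow : ∀ n : ℕ, B ^ (n + 1) = B.trace ^ n • B := by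
    intro n
    induction n with
    | zero => simp
    | succ n ih =>
      rw [pow_succ, ih, Matrix.smul_mul, h, smul_smul, pow_succ]
  have hsum : Summable (fun n : ℕ => ((Nat.factorial (n + 1) : ℂ))⁻¹ * B.trace ^ n) := by
    apply Summable.of_norm_bounded (NormedSpace.norm_expSeries_summable' (𝕂 := ℂ) B.trace)
    intro n
    simp only [norm_mul, norm_smul, norm_pow, norm_inv, Complex.norm_natCast]
    gcongr
    exact Nat.le_succ n
  refine ⟨∑' n : ℕ, ((Nat.factorial (n + 1) : ℂ))⁻¹ * B.trace ^ n, ?_, ?_⟩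
  · letI : SeminormedRing (Matrix (Fin 2) (Fin 2) ℂ) := Matrix.linftyOpSemiNormedRing
    letI : NormedRing (Matrix (Fin 2) (Fin 2) ℂ) := Matrix.linftyOpNormedRing
    letI : NormedAlgebra ℂ (Matrix (Fin 2) (Fin 2) ℂ) := Matrix.linftyOpNormedAlgebra
    have hs : HasSum (fun n : ℕ => ((Nat.factorial (n + 1) : ℂ))⁻¹ • B ^ (n + 1))
        ((∑' n : ℕ, ((Nat.factorial (n + 1) : ℂ))⁻¹ * B.trace ^ n) • B) := by
      have := hsum.hasSum.smul_const B
      convert this using 2 with n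
      rw [hpow n, smul_smul]
    have h0 : HasSum (fun n : ℕ => ((Nat.factorial n : ℂ))⁻¹ • B ^ n)
        ((∑' n : ℕ, ((Nat.factorial (n + 1) : ℂ))⁻¹ * B.trace ^ n) • B + 1) := by
      have h1 := (hasSum_nat_add_iff
        (f := fun n : ℕ => ((Nat.factorial n : ℂ))⁻¹ • B ^ n) 1).1 (by simpa using hs)
      simpa using h1
    exact ((NormedSpace.exp_series_hasSum_exp' (𝕂 := ℂ) B).unique h0).trans (add_comm _ _)
  · have key : Complex.exp B.trace =
        1 + B.trace * ∑' n : ℕ, ((Nat.factorial (n + 1) : ℂ))⁻¹ * B.trace ^ n := by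
      rw [Complex.exp_eq_exp_ℂ, NormedSpace.exp_eq_tsum ℂ]
      beta_reduce
      rw [Summable.tsum_eq_zero_add (NormedSpace.expSeries_summable' (𝕂 := ℂ) B.trace)]
      congr 1
      · norm_num
      · rw [← tsum_mul_left]
        exact tsum_congr fun n => by rw [smul_eq_mul, pow_succ]; ring
    rw [key]; ring

lemma psd_facts (H : Matrix (Fin 2) (Fin 2) ℂ) (hpsd : H.PosSemidef) (hdet : H.det = 0) :
    ∃ h : ℝ, 0 ≤ h ∧ H.trace = (h : ℂ) ∧ (h = 0 → H = 0) := by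
  have d0 : 0 ≤ H 0 0 := by
    exact hpsd.diag_nonneg
  have d1 : 0 ≤ H 1 1 := by
    exact hpsd.diag_nonneg
  rw [Complex.nonneg_iff] at d0 d1
  refine ⟨(H 0 0).re + (H 1 1).re, by linarith [d0.1, d1.1], ?_, ?_⟩
  · rw [Matrix.trace_fin_two]
    apply Complex.ext <;> simp [← d0.2, ← d1.2]
  · intro h0
    have e0 : H 0 0 = 0 := by
      apply Complex.ext <;> simp [← d0.2]; linarith [d0.1, d1.1]
    have e1 : H 1 1 = 0 := by
      apply Complex.ext <;> simp [← d1.2]; linarith [d0.1, d1.1]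
    rw [Matrix.det_fin_two, e0, e1] at hdet
    have h10 : H 1 0 = star (H 0 1) := (hpsd.1.apply 1 0).symm
    have h01 : H 0 1 = 0 := by
      have : H 0 1 * star (H 0 1) = 0 := by linear_combination -hdet - H 0 1 * h10
      simpa [Complex.ext_iff, Complex.mul_conj', mul_comm] using
        (mul_self_eq_zero (a := ‖H 0 1‖)).mp (by
          have := congrArg (‖·‖) this
          simpa [_root_.map_mul] using this)
    have h10' : H 1 0 = 0 := by rw [h10, h01, star_zero]
    ext i j
    fin_cases i <;> fin_cases j <;> simp [e0, e1, h01, h10']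

lemma det_one_add_smul (s : ℂ) (B : Matrix (Fin 2) (Fin 2) ℂ) (hdet : B.det = 0) :
    (1 + s • B).det = 1 + s * B.trace := by
  rw [Matrix.det_fin_two] at hdet ⊢
  rw [Matrix.trace_fin_two]
  simp [Matrix.one_apply]
  linear_combination s^2 * hdet

lemma trace_one_add_smul (s : ℂ) (B : Matrix (Fin 2) (Fin 2) ℂ) :
    (1 + s • B).trace = 2 + s * B.trace := by
  rw [Matrix.trace_add, Matrix.trace_smul, Matrix.trace_one]
  simp [smul_eq_mul]

/-- Lemma 2 (Appendix A): the Gibbs representation `ρ = exp(−βH)/tr(exp(−βH))` of a positive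
definite density matrix by a positive semidefinite Hamiltonian with vanishing determinant
is unique up to the simultaneous scaling `β ↦ λβ`, `H ↦ λ⁻¹H`: any two such representations
satisfy `β₁·H₁ = β₂·H₂`, and in particular `H₂ = (β₁/β₂)·H₁`. -/
theorem gibbs_unique_up_to_scaling
    (ρ : Matrix (Fin 2) (Fin 2) ℂ) (hρ : ρ.PosDef) (hρtr : ρ.trace = 1)
    (β₁ β₂ : ℝ) (hβ₁ : 0 < β₁) (hβ₂ : 0 < β₂)
    (H₁ H₂ : Matrix (Fin 2) (Fin 2) ℂ)
    (hH₁herm : H₁.IsHermitian) (hH₂herm : H₂.IsHermitian)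
    (hH₁psd : H₁.PosSemidef) (hH₂psd : H₂.PosSemidef)
    (hH₁det : H₁.det = 0) (hH₂det : H₂.det = 0)
    (hρ₁ : ρ = ((exp (-((β₁ : ℂ) • H₁))).trace)⁻¹ • exp (-((β₁ : ℂ) • H₁)))
    (hρ₂ : ρ = ((exp (-((β₂ : ℂ) • H₂))).trace)⁻¹ • exp (-((β₂ : ℂ) • H₂))) :
    (β₁ : ℂ) • H₁ = (β₂ : ℂ) • H₂ ∧ H₂ = ((β₁ / β₂ : ℝ) : ℂ) • H₁ := by
  obtain ⟨h₁, h₁nn, htr₁, hz₁⟩ := psd_facts H₁ hH₁psd hH₁det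
  obtain ⟨h₂, h₂nn, htr₂, hz₂⟩ := psd_facts H₂ hH₂psd hH₂det
  set B₁ := -((β₁ : ℂ) • H₁) with hB₁
  set B₂ := -((β₂ : ℂ) • H₂) with hB₂
  have detB₁ : B₁.det = 0 := by
    rw [hB₁, ← neg_smul, Matrix.det_smul, hH₁det, mul_zero]
  have detB₂ : B₂.det = 0 := by
    rw [hB₂, ← neg_smul, Matrix.det_smul, hH₂det, mul_zero]
  set τ₁ : ℝ := -(β₁ * h₁) with hτ₁def
  set τ₂ : ℝ := -(β₂ * h₂) with hτ₂def
  have trB₁ : B₁.trace = (τ₁ : ℂ) := by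
    rw [hB₁, Matrix.trace_neg, Matrix.trace_smul, htr₁, smul_eq_mul, hτ₁def]
    push_cast; ring
  have trB₂ : B₂.trace = (τ₂ : ℂ) := by
    rw [hB₂, Matrix.trace_neg, Matrix.trace_smul, htr₂, smul_eq_mul, hτ₂def]
    push_cast; ring
  obtain ⟨s₁, hE₁, hs₁⟩ := exp_of_sq B₁ (sq_eq_trace_smul B₁ detB₁)
  obtain ⟨s₂, hE₂, hs₂⟩ := exp_of_sq B₂ (sq_eq_trace_smul B₂ detB₂)
  rw [trB₁] at hs₁
  rw [trB₂] at hs₂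
  -- traces and determinants of the exponentials
  have tE₁ : (exp B₁).trace = ((1 + Real.exp τ₁ : ℝ) : ℂ) := by
    rw [hE₁, trace_one_add_smul, trB₁, Complex.ofReal_add, Complex.ofReal_one,
      Complex.ofReal_exp]
    linear_combination hs₁
  have tE₂ : (exp B₂).trace = ((1 + Real.exp τ₂ : ℝ) : ℂ) := by
    rw [hE₂, trace_one_add_smul, trB₂, Complex.ofReal_add, Complex.ofReal_one,
      Complex.ofReal_exp]
    linear_combination hs₂
  have dE₁ : (exp B₁).det = ((Real.exp τ₁ : ℝ) : ℂ) := by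
    rw [hE₁, det_one_add_smul s₁ B₁ detB₁, trB₁, Complex.ofReal_exp]
    linear_combination hs₁
  have dE₂ : (exp B₂).det = ((Real.exp τ₂ : ℝ) : ℂ) := by
    rw [hE₂, det_one_add_smul s₂ B₂ detB₂, trB₂, Complex.ofReal_exp]
    linear_combination hs₂
  -- the determinant of ρ computed two ways
  have hdetρ : (((1 + Real.exp τ₁ : ℝ) : ℂ))⁻¹ ^ 2 * ((Real.exp τ₁ : ℝ) : ℂ)
      = (((1 + Real.exp τ₂ : ℝ) : ℂ))⁻¹ ^ 2 * ((Real.exp τ₂ : ℝ) : ℂ) := by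
    have e1 := congrArg Matrix.det hρ₁
    have e2 := congrArg Matrix.det hρ₂
    rw [Matrix.det_smul, tE₁, dE₁] at e1
    rw [Matrix.det_smul, tE₂, dE₂] at e2
    rw [e1] at e2
    simpa [Fintype.card_fin] using e2
  -- translate to a real equation and solve
  have ha : (0:ℝ) < 1 + Real.exp τ₁ := by positivity
  have hb : (0:ℝ) < 1 + Real.exp τ₂ := by positivity
  have hxy : Real.exp τ₁ * (1 + Real.exp τ₂) ^ 2
      = Real.exp τ₂ * (1 + Real.exp τ₁) ^ 2 := by
    have := hdetρ
    rw [← Complex.ofReal_inv, ← Complex.ofReal_inv, ← Complex.ofReal_pow,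
      ← Complex.ofReal_pow, ← Complex.ofReal_mul, ← Complex.ofReal_mul] at this
    have hr := Complex.ofReal_injective this
    field_simp at hr
    linarith [hr]
  have hτeq : τ₁ = τ₂ := by
    have hx1 : Real.exp τ₁ ≤ 1 := by
      rw [hτ₁def]; exact Real.exp_le_one_iff.mpr (by nlinarith)
    have hy1 : Real.exp τ₂ ≤ 1 := by
      rw [hτ₂def]; exact Real.exp_le_one_iff.mpr (by nlinarith)
    have hx0 := Real.exp_pos τ₁
    have hy0 := Real.exp_pos τ₂
    have key : (Real.exp τ₁ - Real.exp τ₂) * (1 - Real.exp τ₁ * Real.exp τ₂) = 0 := by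
      nlinarith [hxy]
    rw [← Real.exp_eq_exp]
    rcases mul_eq_zero.mp key with h | h
    · linarith
    · nlinarith
  -- hence the exponentials coincide
  have tne : (((1 + Real.exp τ₁ : ℝ) : ℂ)) ≠ 0 := by
    exact_mod_cast ne_of_gt ha
  have hEeq : exp B₁ = exp B₂ := by
    have := hρ₁.symm.trans hρ₂
    rw [tE₁, tE₂, ← hτeq] at this
    exact smul_right_injective _ (inv_ne_zero tne) this
  have hsB : s₁ • B₁ = s₂ • B₂ := by
    have := hE₁.symm.trans (hEeq.trans hE₂)
    exact add_left_cancel this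
  -- main identity B₁ = B₂
  have hBeq : B₁ = B₂ := by
    by_cases hτ0 : τ₁ = 0
    · have hh₁ : h₁ = 0 := by
        have : β₁ * h₁ = 0 := by rw [hτ₁def] at hτ0; linarith
        rcases mul_eq_zero.mp this with h | h
        · exact absurd h (ne_of_gt hβ₁)
        · exact h
      have hh₂ : h₂ = 0 := by
        have hτ0' : τ₂ = 0 := by rw [← hτeq]; exact hτ0
        have : β₂ * h₂ = 0 := by rw [hτ₂def] at hτ0'; linarith
        rcases mul_eq_zero.mp this with h | h
        · exact absurd h (ne_of_gt hβ₂)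
        · exact h
      rw [hB₁, hB₂, hz₁ hh₁, hz₂ hh₂]
      simp
    · have hseq : s₁ = s₂ := by
        rw [← hτeq] at hs₂
        have hτc : ((τ₁ : ℝ) : ℂ) ≠ 0 := by exact_mod_cast hτ0
        have : (τ₁ : ℂ) * s₁ = (τ₁ : ℂ) * s₂ := by
          linear_combination hs₁ - hs₂
        exact mul_left_cancel₀ hτc this
      have hsne : s₁ ≠ 0 := by
        intro h0
        rw [h0] at hs₁
        have hc : ((Real.exp τ₁ : ℝ) : ℂ) = ((1 : ℝ) : ℂ) := by
          rw [Complex.ofReal_exp]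
          push_cast
          linear_combination -hs₁
        have hr : Real.exp τ₁ = Real.exp 0 := by
          rw [Real.exp_zero]; exact_mod_cast hc
        exact hτ0 (Real.exp_eq_exp.mp hr)
      rw [hseq] at hsB
      exact smul_right_injective _ (hseq ▸ hsne) hsB
  have main : (β₁ : ℂ) • H₁ = (β₂ : ℂ) • H₂ := by
    have := congrArg Neg.neg hBeq
    rwa [hB₁, hB₂, neg_neg, neg_neg] at this
  refine ⟨main, ?_⟩
  have hβ₂c : ((β₂ : ℝ) : ℂ) ≠ 0 := by exact_mod_cast ne_of_gt hβ₂
  have : H₂ = ((β₂ : ℂ))⁻¹ • ((β₂ : ℂ) • H₂) := by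
    rw [smul_smul, inv_mul_cancel₀ hβ₂c, one_smul]
  rw [this, ← main, smul_smul]
  congr 1
  push_cast
  rw [div_eq_inv_mul]
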